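/- Let X, Y be real Hilbert spaces, T : X → Y a bounded linear operator with adjoint T*, f† ∈ X and n ≥ 1. Then the following are equivalent: (i) there exists p ∈ Y with f† = (T*T)^{n−1} T* p; (ii) there exist A > 0 and ω ∈ X such that f† = (T*T)^{n−1} ω and ⟪ω, f⟫ ≤ (1/2)‖f‖² + A ‖T f‖ for all f ∈ X. -/

import Mathlib

open scoped RealInnerProductSpace

/-- If `⟪ω, f⟫ ≤ A‖Tf⟫` for all `f`, then `ω ∈ ran T*`. -/
lemma range_adjoint_of_bound {X Y : Type*}
    [NormedAddCommGroup X] [InnerProductSpace ℝ X] [CompleteSpace X]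
    [NormedAddCommGroup Y] [InnerProductSpace ℝ Y] [CompleteSpace Y]
    (T : X →L[ℝ] Y) (ω : X) (A : ℝ)
    (hb : ∀ f : X, |⟪ω, f⟫| ≤ A * ‖T f‖) :
    ∃ q : Y, ContinuousLinearMap.adjoint T q = ω := by
  -- linear functional on X
  set ℓ : X →ₗ[ℝ] ℝ := (innerSL ℝ ω : X →L[ℝ] ℝ).toLinearMap with hℓ
  have hker : LinearMap.ker (T : X →ₗ[ℝ] Y) ≤ LinearMap.ker ℓ := by
    intro f hf
    have hf' : T f = 0 := hf
    have := hb f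
    rw [hf'] at this
    simp only [norm_zero, mul_zero] at this
    have : ⟪ω, f⟫ = 0 := abs_eq_zero.mp (le_antisymm this (abs_nonneg _))
    simpa [ℓ] using this
  -- functional on range T
  set φ₀ : LinearMap.range (T : X →ₗ[ℝ] Y) →ₗ[ℝ] ℝ :=
    ((LinearMap.ker (T : X →ₗ[ℝ] Y)).liftQ ℓ hker).comp
      ((LinearMap.quotKerEquivRange (T : X →ₗ[ℝ] Y)).symm : _ →ₗ[ℝ] _) with hφ₀
  have hφ₀val : ∀ f : X, ∀ h : (T : X →ₗ[ℝ] Y) f ∈ LinearMap.range (T : X →ₗ[ℝ] Y),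
      φ₀ ⟨(T : X →ₗ[ℝ] Y) f, h⟩ = ⟪ω, f⟫ := by
    intro f h
    have : (LinearMap.quotKerEquivRange (T : X →ₗ[ℝ] Y)).symm ⟨(T : X →ₗ[ℝ] Y) f, h⟩
        = Submodule.Quotient.mk f :=
      LinearMap.quotKerEquivRange_symm_apply_image (T : X →ₗ[ℝ] Y) f h
    have e1 : φ₀ ⟨(T : X →ₗ[ℝ] Y) f, h⟩ =
        ((LinearMap.ker (T : X →ₗ[ℝ] Y)).liftQ ℓ hker)
          ((LinearMap.quotKerEquivRange (T : X →ₗ[ℝ] Y)).symm ⟨(T : X →ₗ[ℝ] Y) f, h⟩) := rfl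
    rw [e1, this, Submodule.liftQ_apply]
    rfl
  have hφ₀bound : ∀ y : LinearMap.range (T : X →ₗ[ℝ] Y), ‖φ₀ y‖ ≤ A * ‖y‖ := by
    rintro ⟨y, hy⟩
    obtain ⟨f, rfl⟩ := hy
    rw [hφ₀val f (LinearMap.mem_range_self _ f)]
    simpa using hb f
  set φ : LinearMap.range (T : X →ₗ[ℝ] Y) →L[ℝ] ℝ :=
    LinearMap.mkContinuous φ₀ A hφ₀bound with hφ
  obtain ⟨g, hg, _⟩ := exists_extension_norm_eq (LinearMap.range (T : X →ₗ[ℝ] Y)) φ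
  refine ⟨(InnerProductSpace.toDual ℝ Y).symm g, ?_⟩
  apply ext_inner_right ℝ
  intro f
  have h1 : ⟪ContinuousLinearMap.adjoint T ((InnerProductSpace.toDual ℝ Y).symm g), f⟫
      = ⟪(InnerProductSpace.toDual ℝ Y).symm g, T f⟫ :=
    ContinuousLinearMap.adjoint_inner_left T _ _
  rw [h1, InnerProductSpace.toDual_symm_apply]
  have hmem : (T : X →ₗ[ℝ] Y) f ∈ LinearMap.range (T : X →ₗ[ℝ] Y) :=
    LinearMap.mem_range_self _ f
  have h2 : g ((T : X →ₗ[ℝ] Y) f) = φ ⟨(T : X →ₗ[ℝ] Y) f, hmem⟩ := hg ⟨(T : X →ₗ[ℝ] Y) f, hmem⟩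
  have h3 : φ ⟨(T : X →ₗ[ℝ] Y) f, hmem⟩ = φ₀ ⟨(T : X →ₗ[ℝ] Y) f, hmem⟩ := rfl
  exact h2.trans (h3.trans (hφ₀val f hmem))

/-- In Hilbert spaces, the spectral source condition
`f† ∈ ran((T*T)^{n−1} T*)` is equivalent to the variational source condition
`VSC^{2n−1}(f†, A√·)`: existence of `ω ∈ X` with `f† = (T*T)^{n−1} ω` and
`⟪ω, f⟫ ≤ (1/2)‖f‖² + A‖T f‖` for all `f ∈ X`. -/
theorem stmt_16 {X Y : Type*}
    [NormedAddCommGroup X] [InnerProductSpace ℝ X] [CompleteSpace X]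
    [NormedAddCommGroup Y] [InnerProductSpace ℝ Y] [CompleteSpace Y]
    (T : X →L[ℝ] Y) (fdag : X) (n : ℕ) (hn : 1 ≤ n) :
    (∃ p : Y, fdag = ((ContinuousLinearMap.adjoint T ∘L T) ^ (n - 1))
      (ContinuousLinearMap.adjoint T p)) ↔
    (∃ A : ℝ, 0 < A ∧ ∃ ω : X,
      fdag = ((ContinuousLinearMap.adjoint T ∘L T) ^ (n - 1)) ω ∧
      ∀ f : X, ⟪ω, f⟫ ≤ 1 / 2 * ‖f‖ ^ 2 + A * ‖T f‖) := by
  constructor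
  · rintro ⟨p, rfl⟩
    refine ⟨‖p‖ + 1, by positivity, ContinuousLinearMap.adjoint T p, rfl, fun f => ?_⟩
    have h1 : ⟪ContinuousLinearMap.adjoint T p, f⟫ = ⟪p, T f⟫ :=
      ContinuousLinearMap.adjoint_inner_left T _ _
    have h2 : ⟪p, T f⟫ ≤ ‖p‖ * ‖T f‖ := real_inner_le_norm p (T f)
    have h3 : ‖p‖ * ‖T f‖ ≤ (‖p‖ + 1) * ‖T f‖ := by nlinarith [norm_nonneg (T f)]
    nlinarith [sq_nonneg ‖f‖, h1, h2, h3]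
  · rintro ⟨A, hA, ω, rfl, hω⟩
    -- derive the linear bound |⟪ω, f⟫| ≤ A ‖T f‖
    have hlin : ∀ f : X, ⟪ω, f⟫ ≤ A * ‖T f‖ := by
      intro f
      have key : ∀ ε : ℝ, 0 < ε → ⟪ω, f⟫ ≤ ε / 2 * ‖f‖ ^ 2 + A * ‖T f‖ := by
        intro ε hε
        have := hω (ε • f)
        rw [real_inner_smul_right, map_smul, norm_smul, norm_smul] at this
        have h2 : ε * ⟪ω, f⟫ ≤ 1 / 2 * (ε ^ 2 * ‖f‖ ^ 2) + A * (ε * ‖T f‖) := by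
          have habs : ‖ε‖ = ε := abs_of_pos hε
          rw [habs] at this
          nlinarith [this]
        nlinarith [h2, hε]
      by_contra hc
      push_neg at hc
      rcases eq_or_ne f 0 with rfl | hf
      · simp at hc
      · have hfn : 0 < ‖f‖ ^ 2 := pow_pos (norm_pos_iff.mpr hf) 2
        set δ := ⟪ω, f⟫ - A * ‖T f‖ with hδ
        have hδpos : 0 < δ := by linarith
        have hk := key (δ / ‖f‖ ^ 2) (div_pos hδpos hfn)
        have h4 : δ / ‖f‖ ^ 2 / 2 * ‖f‖ ^ 2 = δ / 2 := by field_simp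
        rw [h4] at hk
        linarith
    have habs : ∀ f : X, |⟪ω, f⟫| ≤ A * ‖T f‖ := by
      intro f
      rw [abs_le]
      refine ⟨?_, hlin f⟩
      have := hlin (-f)
      rw [inner_neg_right, map_neg, norm_neg] at this
      linarith
    obtain ⟨q, hq⟩ := range_adjoint_of_bound T ω A habs
    exact ⟨q, by rw [hq]⟩
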